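/- Let (Z_{in})_{1≤i≤n} be independent bounded real random variables and S_n = Σ_{i=1}^n Z_{in}. Let (δ_n) be a sequence of positive reals such that Σ_{i=1}^n Var[Z_{in}] ≤ δ_n and max_{1≤i≤n} |Z_{in}| ≤ (log 2 / 2)·√δ_n / √(log n) almost surely. Then for every L > 0 there exists N₀ ∈ ℕ such that for all n ≥ N₀, P( |S_n − E[S_n]| ≥ (1+L) √δ_n √(log n) ) ≤ 2 exp(−L log n) = 2 n^{−L}. -/

import Mathlib

open MeasureTheory ProbabilityTheory Filter

lemma aux_exp_le {x : ℝ} (h : |x| ≤ 1) : Real.exp x ≤ 1 + x + x ^ 2 := by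
  have h2 := Real.exp_bound h (by norm_num : 0 < 2)
  have hsum : ∑ m ∈ Finset.range 2, x ^ m / m.factorial = 1 + x := by
    simp [Finset.sum_range_succ]
  rw [hsum] at h2
  norm_num [Nat.factorial] at h2
  have h3 := abs_le.mp h2
  have hx2 : |x| ^ 2 = x ^ 2 := sq_abs x
  nlinarith [sq_nonneg x]

lemma aux_int {Ω : Type*} [MeasurableSpace Ω] {P : Measure Ω} [IsFiniteMeasure P]
    {f : Ω → ℝ} {C : ℝ} (hm : AEStronglyMeasurable f P) (h : ∀ᵐ ω ∂P, |f ω| ≤ C) :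
    Integrable f P :=
  (integrable_const C).mono' hm (h.mono fun ω hw => by rwa [Real.norm_eq_abs])

lemma aux_sum_Icc {M : Type*} [AddCommMonoid M] (f : ℕ → M) (n : ℕ) :
    ∑ i ∈ Finset.Icc 1 n, f i = ∑ i : Fin n, f (i + 1) := by
  rw [Fin.sum_univ_eq_sum_range (fun i => f (i + 1)) n]
  induction n with
  | zero => simp
  | succ m ih =>
    rw [Finset.sum_Icc_succ_top (Nat.one_le_iff_ne_zero.mpr (Nat.succ_ne_zero m)),
      Finset.sum_range_succ, ih]

lemma aux_mgf_le {Ω : Type*} [MeasurableSpace Ω] {P : Measure Ω} [IsProbabilityMeasure P]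
    {Y : Ω → ℝ} {c t : ℝ} (hm : Measurable Y) (hb : ∀ᵐ ω ∂P, |Y ω| ≤ c)
    (htc : |t| * c ≤ 1) (hmean : ∫ ω, Y ω ∂P = 0) :
    mgf Y P t ≤ Real.exp (t ^ 2 * ∫ ω, (Y ω) ^ 2 ∂P) := by
  have hYint : Integrable Y P := aux_int hm.aestronglyMeasurable hb
  have hY2int : Integrable (fun ω => (Y ω) ^ 2) P := by
    refine aux_int (C := c ^ 2) (hm.pow_const 2).aestronglyMeasurable
      (hb.mono fun ω hw => ?_)
    calc |Y ω ^ 2| = |Y ω| ^ 2 := by rw [abs_pow]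
    _ ≤ c ^ 2 := by gcongr
  have hbt : ∀ᵐ ω ∂P, |t * Y ω| ≤ 1 := by
    filter_upwards [hb] with ω hw
    calc |t * Y ω| = |t| * |Y ω| := abs_mul t (Y ω)
    _ ≤ |t| * c := by gcongr
    _ ≤ 1 := htc
  have hexpint : Integrable (fun ω => Real.exp (t * Y ω)) P := by
    refine aux_int (C := Real.exp 1) ((hm.const_mul t).exp).aestronglyMeasurable
      (hbt.mono fun ω hw => ?_)
    calc |Real.exp (t * Y ω)| = Real.exp (t * Y ω) := abs_of_pos (Real.exp_pos _)
    _ ≤ Real.exp 1 := Real.exp_le_exp.mpr ((le_abs_self _).trans hw)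
  have h1int : Integrable (fun ω => 1 + t * Y ω) P :=
    (integrable_const 1).add (hYint.const_mul t)
  have hrhsint : Integrable (fun ω => 1 + t * Y ω + t ^ 2 * (Y ω) ^ 2) P :=
    h1int.add (hY2int.const_mul (t ^ 2))
  have hle : mgf Y P t ≤ ∫ ω, (1 + t * Y ω + t ^ 2 * (Y ω) ^ 2) ∂P := by
    refine integral_mono_ae hexpint hrhsint ?_
    filter_upwards [hbt] with ω hw
    have h4 := aux_exp_le hw
    nlinarith [h4]
  have heq : ∫ ω, (1 + t * Y ω + t ^ 2 * (Y ω) ^ 2) ∂P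
      = 1 + t ^ 2 * ∫ ω, (Y ω) ^ 2 ∂P := by
    rw [integral_add h1int (hY2int.const_mul (t ^ 2)),
      integral_add (integrable_const 1) (hYint.const_mul t),
      integral_const_mul, integral_const_mul, hmean, integral_const]
    simp
  rw [heq] at hle
  refine hle.trans ?_
  have h5 := Real.add_one_le_exp (t ^ 2 * ∫ ω, (Y ω) ^ 2 ∂P)
  linarith


/-- **Hoeffding-type concentration bound (Lemma 4.4.1).**
Let `(Z_{in})_{1 ≤ i ≤ n}` be independent bounded real random variables on a probability
space, `S_n = ∑_{i=1}^n Z_{in}`, and let `(δ_n)` be positive reals with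
`∑_{i=1}^n Var[Z_{in}] ≤ δ_n` and, almost surely,
`max_{1 ≤ i ≤ n} |Z_{in}| ≤ (log 2 / 2) √δ_n / √(log n)`.
Then for every `L > 0` there is `N₀` such that for all `n ≥ N₀`,
`P(|S_n − E S_n| ≥ (1+L) √δ_n √(log n)) ≤ 2 exp(−L log n) = 2 n^{−L}`. -/
theorem hoeffding_type_bound
    {Ω : Type*} [MeasurableSpace Ω] (P : Measure Ω) [IsProbabilityMeasure P]
    (Z : ℕ → ℕ → Ω → ℝ)               -- `Z n i` is `Z_{in}`
    (δ : ℕ → ℝ) (hδpos : ∀ n, 0 < δ n)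
    (hmeas : ∀ n i, Measurable (Z n i))
    -- for each `n`, the variables `Z_{1n}, …, Z_{nn}` are independent
    (hindep : ∀ n : ℕ, iIndepFun
        (fun i : Fin n => Z n (i + 1)) P)
    -- boundedness (uniform almost sure bound for each `n`)
    (hbdd : ∀ n, ∃ M : ℝ, ∀ᵐ ω ∂P, ∀ i ∈ Finset.Icc 1 n, |Z n i ω| ≤ M)
    -- `∑_{i=1}^n Var[Z_{in}] ≤ δ_n`
    (hvar : ∀ n, ∑ i ∈ Finset.Icc 1 n, variance (Z n i) P ≤ δ n)
    -- `max_{1 ≤ i ≤ n} |Z_{in}| ≤ (log 2 / 2) √δ_n / √(log n)` a.s.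
    (hmax : ∀ n, ∀ᵐ ω ∂P, ∀ i ∈ Finset.Icc 1 n,
        |Z n i ω| ≤ (Real.log 2 / 2) * Real.sqrt (δ n) / Real.sqrt (Real.log n)) :
    ∀ L > (0:ℝ), ∃ N₀ : ℕ, ∀ n ≥ N₀,
      P {ω | (1 + L) * Real.sqrt (δ n) * Real.sqrt (Real.log n) ≤
          |(∑ i ∈ Finset.Icc 1 n, Z n i ω) -
            ∫ ω', (∑ i ∈ Finset.Icc 1 n, Z n i ω') ∂P|}
        ≤ ENNReal.ofReal (2 * Real.exp (-L * Real.log n))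
      ∧ 2 * Real.exp (-L * Real.log n) = 2 * (n:ℝ) ^ (-L) := by
  intro L hL
  refine ⟨2, fun n hn => ?_⟩
  have hn1 : (1:ℝ) < (n:ℝ) := by exact_mod_cast hn
  have hnpos : (0:ℝ) < (n:ℝ) := lt_trans one_pos hn1
  have hlog : 0 < Real.log n := Real.log_pos hn1
  have hδ : 0 < δ n := hδpos n
  have hsδ : 0 < Real.sqrt (δ n) := Real.sqrt_pos.mpr hδ
  have hsl : 0 < Real.sqrt (Real.log n) := Real.sqrt_pos.mpr hlog
  set B : ℝ := (Real.log 2 / 2) * Real.sqrt (δ n) / Real.sqrt (Real.log n) with hBdef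
  have hB0 : 0 ≤ B := by
    have := Real.log_pos (by norm_num : (1:ℝ) < 2)
    positivity
  set μi : ℕ → ℝ := fun i => ∫ ω, Z n i ω ∂P with hμidef
  -- per-index facts
  have hZb : ∀ i ∈ Finset.Icc 1 n, ∀ᵐ ω ∂P, |Z n i ω| ≤ B := fun i hi =>
    (hmax n).mono fun ω h => h i hi
  have hinti : ∀ i ∈ Finset.Icc 1 n, Integrable (Z n i) P := fun i hi =>
    aux_int (hmeas n i).aestronglyMeasurable (hZb i hi)
  have hμb : ∀ i ∈ Finset.Icc 1 n, |μi i| ≤ B := by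
    intro i hi
    have h := norm_integral_le_of_norm_le_const (μ := P) (f := Z n i) (C := B)
      ((hZb i hi).mono fun ω h => by rwa [Real.norm_eq_abs])
    simpa using h
  -- centered variables, a.e. bounded by 2B
  set Y : ℕ → Ω → ℝ := fun i ω => Z n i ω - μi i with hYdef
  have hYmeas : ∀ i, Measurable (Y i) := fun i => (hmeas n i).sub measurable_const
  have hYb : ∀ i ∈ Finset.Icc 1 n, ∀ᵐ ω ∂P, |Y i ω| ≤ 2 * B := by
    intro i hi
    filter_upwards [hZb i hi] with ω hw
    calc |Y i ω| ≤ |Z n i ω| + |μi i| := abs_sub _ _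
    _ ≤ B + B := add_le_add hw (hμb i hi)
    _ = 2 * B := by ring
  have hYmean : ∀ i ∈ Finset.Icc 1 n, ∫ ω, Y i ω ∂P = 0 := by
    intro i hi
    rw [hYdef]
    simp only
    rw [integral_sub (hinti i hi) (integrable_const _), integral_const]
    simp [hμidef]
  have hYsq : ∀ i ∈ Finset.Icc 1 n, ∫ ω, (Y i ω) ^ 2 ∂P = variance (Z n i) P := by
    intro i hi
    have hmem : MemLp (Z n i) 2 P := by
      refine MemLp.of_bound (hmeas n i).aestronglyMeasurable B ?_
      exact (hZb i hi).mono fun ω h => by rwa [Real.norm_eq_abs]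
    rw [variance_eq_integral (hmeas n i).aemeasurable]
  -- the parameter λ
  set lam : ℝ := Real.sqrt (Real.log n) / Real.sqrt (δ n) with hlamdef
  have hlampos : 0 < lam := div_pos hsl hsδ
  have hlam2B : lam * (2 * B) = Real.log 2 := by
    rw [hlamdef, hBdef]
    field_simp
  have hlog2le1 : Real.log 2 ≤ 1 := by
    have := Real.log_le_sub_one_of_pos (by norm_num : (0:ℝ) < 2)
    linarith
  have hlamsq : lam ^ 2 * δ n = Real.log n := by
    rw [hlamdef, div_pow, Real.sq_sqrt hlog.le, Real.sq_sqrt hδ.le]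
    field_simp
  -- mgf bound for each centered variable, for s = ± lam
  have hmgf : ∀ s : ℝ, |s| = lam → ∀ i ∈ Finset.Icc 1 n,
      mgf (Y i) P s ≤ Real.exp (lam ^ 2 * variance (Z n i) P) := by
    intro s hs i hi
    have h1 : |s| * (2 * B) ≤ 1 := by rw [hs, hlam2B]; exact hlog2le1
    have h2 := aux_mgf_le (hYmeas i) (hYb i hi) h1 (hYmean i hi)
    rw [hYsq i hi] at h2
    have hs2 : s ^ 2 = lam ^ 2 := by rw [← sq_abs, hs]
    rwa [hs2] at h2
  -- Fin n indexing and independence of centered variables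
  have hmemIcc : ∀ i : Fin n, (i : ℕ) + 1 ∈ Finset.Icc 1 n :=
    fun i => Finset.mem_Icc.mpr ⟨Nat.le_add_left 1 i, i.isLt⟩
  set Xc : Fin n → Ω → ℝ := fun i => Y ((i : ℕ) + 1) with hXcdef
  have hindepC : iIndepFun Xc P := by
    have := (hindep n).comp (fun i : Fin n => fun x : ℝ => x - μi ((i : ℕ) + 1))
      (fun i => measurable_id.sub measurable_const)
    exact this
  set W : Ω → ℝ := ∑ i : Fin n, Xc i with hWdef
  have hWapply : ∀ ω, W ω = ∑ i : Fin n, Y ((i : ℕ) + 1) ω := by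
    intro ω; rw [hWdef]; simp [hXcdef]
  -- mgf of the sum
  have hmgfW : ∀ s : ℝ, |s| = lam → mgf W P s ≤ Real.exp (Real.log n) := by
    intro s hs
    rw [hWdef, hindepC.mgf_sum (fun i => hYmeas _) Finset.univ]
    calc ∏ i : Fin n, mgf (Xc i) P s
        ≤ ∏ i : Fin n, Real.exp (lam ^ 2 * variance (Z n ((i : ℕ) + 1)) P) :=
          Finset.prod_le_prod (fun i _ => mgf_nonneg)
            (fun i _ => hmgf s hs _ (hmemIcc i))
    _ = Real.exp (∑ i : Fin n, lam ^ 2 * variance (Z n ((i : ℕ) + 1)) P) :=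
          (Real.exp_sum _ _).symm
    _ ≤ Real.exp (Real.log n) := by
          apply Real.exp_le_exp.mpr
          rw [← Finset.mul_sum, ← aux_sum_Icc (fun i => variance (Z n i) P) n, ← hlamsq]
          exact mul_le_mul_of_nonneg_left (hvar n) (sq_nonneg _)
  -- integrability of exp(s * W)
  have hWb : ∀ᵐ ω ∂P, |W ω| ≤ (n : ℝ) * (2 * B) := by
    filter_upwards [hmax n] with ω hw
    rw [hWapply]
    calc |∑ i : Fin n, Y ((i : ℕ) + 1) ω| ≤ ∑ i : Fin n, |Y ((i : ℕ) + 1) ω| :=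
          Finset.abs_sum_le_sum_abs _ _
    _ ≤ ∑ _i : Fin n, 2 * B := by
          refine Finset.sum_le_sum fun i _ => ?_
          calc |Y ((i : ℕ) + 1) ω| ≤ |Z n ((i : ℕ) + 1) ω| + |μi ((i : ℕ) + 1)| := abs_sub _ _
          _ ≤ B + B := add_le_add (hw _ (hmemIcc i)) (hμb _ (hmemIcc i))
          _ = 2 * B := by ring
    _ = (n : ℝ) * (2 * B) := by simp [mul_comm]
  have hWmeas : Measurable W := by
    have hfe : W = fun ω => ∑ i : Fin n, Y ((i : ℕ) + 1) ω := funext hWapply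
    rw [hfe]
    exact Finset.measurable_sum _ (fun i _ => hYmeas _)
  have hexpW : ∀ s : ℝ, Integrable (fun ω => Real.exp (s * W ω)) P := by
    intro s
    refine aux_int (C := Real.exp (|s| * ((n : ℝ) * (2 * B))))
      ((hWmeas.const_mul s).exp).aestronglyMeasurable (hWb.mono fun ω hw => ?_)
    calc |Real.exp (s * W ω)| = Real.exp (s * W ω) := abs_of_pos (Real.exp_pos _)
    _ ≤ Real.exp (|s * W ω|) := Real.exp_le_exp.mpr (le_abs_self _)
    _ ≤ Real.exp (|s| * ((n : ℝ) * (2 * B))) := by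
          apply Real.exp_le_exp.mpr
          rw [abs_mul]
          exact mul_le_mul_of_nonneg_left hw (abs_nonneg s)
  -- the threshold
  set t : ℝ := (1 + L) * Real.sqrt (δ n) * Real.sqrt (Real.log n) with htdef
  have hlamt : lam * t = (1 + L) * Real.log n := by
    rw [hlamdef, htdef]
    have h1 : Real.sqrt (Real.log n) * Real.sqrt (Real.log n) = Real.log n :=
      Real.mul_self_sqrt hlog.le
    field_simp
    linear_combination h1
  -- Chernoff bounds
  have hup : (P {ω | t ≤ W ω}).toReal ≤ Real.exp (-L * Real.log n) := by
    have h := measure_ge_le_exp_mul_mgf (μ := P) (X := W) (t := lam) t hlampos.le (hexpW lam)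
    refine h.trans ?_
    calc Real.exp (-lam * t) * mgf W P lam
        ≤ Real.exp (-lam * t) * Real.exp (Real.log n) := by
          exact mul_le_mul_of_nonneg_left (hmgfW lam (abs_of_pos hlampos)) (Real.exp_pos _).le
    _ = Real.exp (-lam * t + Real.log n) := (Real.exp_add _ _).symm
    _ = Real.exp (-L * Real.log n) := by rw [neg_mul, hlamt]; ring_nf
  have hdown : (P {ω | W ω ≤ -t}).toReal ≤ Real.exp (-L * Real.log n) := by
    have h := measure_le_le_exp_mul_mgf (μ := P) (X := W) (t := -lam) (-t)
      (neg_nonpos.mpr hlampos.le) (hexpW (-lam))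
    refine h.trans ?_
    have habs : |(-lam)| = lam := by rw [abs_neg, abs_of_pos hlampos]
    calc Real.exp (-(-lam) * -t) * mgf W P (-lam)
        ≤ Real.exp (-(-lam) * -t) * Real.exp (Real.log n) :=
          mul_le_mul_of_nonneg_left (hmgfW (-lam) habs) (Real.exp_pos _).le
    _ = Real.exp (-(-lam) * -t + Real.log n) := (Real.exp_add _ _).symm
    _ = Real.exp (-L * Real.log n) := by
          have : -(-lam) * -t = -(lam * t) := by ring
          rw [this, hlamt]; ring_nf
  -- identify the target set
  have hIeq : (∫ ω', (∑ i ∈ Finset.Icc 1 n, Z n i ω') ∂P) = ∑ i ∈ Finset.Icc 1 n, μi i := by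
    rw [integral_finset_sum _ hinti]
  have hSW : ∀ ω, (∑ i ∈ Finset.Icc 1 n, Z n i ω) -
      (∫ ω', (∑ i ∈ Finset.Icc 1 n, Z n i ω') ∂P) = W ω := by
    intro ω
    rw [hIeq, ← Finset.sum_sub_distrib, hWapply,
      aux_sum_Icc (fun i => Z n i ω - μi i) n]
  have hsub : {ω | t ≤ |(∑ i ∈ Finset.Icc 1 n, Z n i ω) -
      ∫ ω', (∑ i ∈ Finset.Icc 1 n, Z n i ω') ∂P|} ⊆
      {ω | t ≤ W ω} ∪ {ω | W ω ≤ -t} := by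
    intro ω hω
    simp only [Set.mem_setOf_eq] at hω
    rw [hSW ω] at hω
    rcases le_abs.mp hω with h | h
    · exact Or.inl h
    · exact Or.inr (show W ω ≤ -t by linarith)
  constructor
  · calc P {ω | t ≤ |(∑ i ∈ Finset.Icc 1 n, Z n i ω) -
        ∫ ω', (∑ i ∈ Finset.Icc 1 n, Z n i ω') ∂P|}
        ≤ P ({ω | t ≤ W ω} ∪ {ω | W ω ≤ -t}) := measure_mono hsub
    _ ≤ P {ω | t ≤ W ω} + P {ω | W ω ≤ -t} := measure_union_le _ _
    _ ≤ ENNReal.ofReal (Real.exp (-L * Real.log n)) +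
        ENNReal.ofReal (Real.exp (-L * Real.log n)) := by
          gcongr
          · rw [← ENNReal.ofReal_toReal (measure_ne_top P _)]
            exact ENNReal.ofReal_le_ofReal hup
          · rw [← ENNReal.ofReal_toReal (measure_ne_top P _)]
            exact ENNReal.ofReal_le_ofReal hdown
    _ = ENNReal.ofReal (2 * Real.exp (-L * Real.log n)) := by
          rw [← ENNReal.ofReal_add (Real.exp_pos _).le (Real.exp_pos _).le]
          ring_nf
  · have : (n : ℝ) ^ (-L) = Real.exp (-L * Real.log n) := by
      rw [Real.rpow_def_of_pos hnpos, mul_comm]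
    rw [this]
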